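/- arXiv:1910.01239 — 4 statements merged into one kernel-verified Lean document; each statement's English description precedes it below -/
import Mathlib

section
/- Let L be a number field that is a quadratic extension of a totally real number field K, with L totally imaginary (L is a CM field). Let N be such that the group of roots of unity in L has order 2N. Then for every unit u of the ring of integers of L, the power u^{2N} lies in the ring of integers of K. -/
open NumberField

lemma normal_of_finrank_two' (K L : Type*) [Field K] [Field L] [Algebra K L]
    (h : Module.finrank K L = 2) : Normal K L := by
  haveI : FiniteDimensional K L := Module.finite_of_finrank_eq_succ h
  rw [normal_iff]
  intro x
  have hx : IsIntegral K x := Algebra.IsIntegral.isIntegral x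
  refine ⟨hx, ?_⟩
  set p := (minpoly K x).map (algebraMap K L) with hp
  have hroot : p.IsRoot x := by
    simp [hp, Polynomial.IsRoot, ← Polynomial.aeval_def, minpoly.aeval]
  have hmul := (Polynomial.mul_divByMonic_eq_iff_isRoot (p := p) (a := x)).mpr hroot
  rw [← hmul]
  refine Polynomial.Splits.mul (Polynomial.Splits.X_sub_C _) ?_
  apply Polynomial.Splits.of_natDegree_le_one
  have hdeg : p.natDegree ≤ 2 := by
    rw [hp, (minpoly.monic hx).natDegree_map]
    have := h ▸ minpoly.natDegree_le (A := K) x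
    omega
  have := Polynomial.natDegree_divByMonic p (Polynomial.monic_X_sub_C x)
  simp only [Polynomial.natDegree_X_sub_C] at this
  omega

/-- For a CM field `L` (a totally imaginary quadratic extension of a totally real
number field `K`) with exactly `2N` roots of unity, the `2N`-th power of every unit
of `𝓞 L` lies in `𝓞 K`. -/
theorem cm_unit_power_totally_real (K L : Type*) [Field K] [Field L]
    [NumberField K] [NumberField L] [Algebra K L]
    (hquad : Module.finrank K L = 2)
    (hKtr : ∀ φ : K →+* ℂ, ∀ x : K, (φ x).im = 0)
    (hLti : ∀ φ : L →+* ℂ, ∃ x : L, (φ x).im ≠ 0)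
    (N : ℕ)
    (hN : Nat.card {x : L // ∃ k : ℕ, 0 < k ∧ x ^ k = 1} = 2 * N) :
    ∀ u : (𝓞 L)ˣ, ∃ x : K, IsIntegral ℤ x ∧
      algebraMap K L x = ((u : 𝓞 L) : L) ^ (2 * N) := by
  classical
  intro u
  haveI : FiniteDimensional K L := Module.finite_of_finrank_eq_succ hquad
  haveI : Normal K L := normal_of_finrank_two' K L hquad
  haveI : IsGalois K L := ⟨⟩
  have hcard : Fintype.card (L ≃ₐ[K] L) = 2 := by
    rw [← Nat.card_eq_fintype_card, IsGalois.card_aut_eq_finrank, hquad]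
  obtain ⟨σ₀, hσ₀⟩ : ∃ σ : L ≃ₐ[K] L, σ ≠ 1 := by
    obtain ⟨σ, hσ⟩ := Fintype.exists_ne_of_one_lt_card (by omega) (1 : L ≃ₐ[K] L)
    exact ⟨σ, hσ⟩
  have huniq : ∀ σ : L ≃ₐ[K] L, σ ≠ 1 → σ = σ₀ := by
    intro σ hσ
    by_contra h
    have h3 : ({(1 : L ≃ₐ[K] L), σ₀, σ} : Finset (L ≃ₐ[K] L)).card = 3 := by
      rw [Finset.card_insert_of_notMem (by simp [hσ₀.symm, hσ.symm]),
        Finset.card_insert_of_notMem (by simp [Ne.symm h]), Finset.card_singleton]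
    have := Finset.card_le_univ ({(1 : L ≃ₐ[K] L), σ₀, σ} : Finset (L ≃ₐ[K] L))
    rw [h3, hcard] at this
    omega
  -- key: every embedding intertwines σ₀ with complex conjugation
  have hconj : ∀ φ : L →+* ℂ, ∀ x : L, φ (σ₀ x) = (starRingEnd ℂ) (φ x) := by
    intro φ
    letI : Algebra K ℂ := (φ.comp (algebraMap K L)).toAlgebra
    let φ' : L →ₐ[K] ℂ := { toRingHom := φ, commutes' := fun k => rfl }
    let ψ : L →ₐ[K] ℂ :=
      { toRingHom := (starRingEnd ℂ).comp φ
        commutes' := fun k => by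
          show (starRingEnd ℂ) (φ (algebraMap K L k)) = φ (algebraMap K L k)
          exact Complex.conj_eq_iff_im.mpr (hKtr (φ.comp (algebraMap K L)) k) }
    have hinj : Function.Injective (fun σ : L ≃ₐ[K] L => φ'.comp σ.toAlgHom) := by
      intro σ τ h
      ext x
      have := DFunLike.congr_fun h x
      simp only [AlgHom.comp_apply] at this
      exact φ.injective this
    have hbij : Function.Bijective (fun σ : L ≃ₐ[K] L => φ'.comp σ.toAlgHom) := by
      rw [Fintype.bijective_iff_injective_and_card]
      refine ⟨hinj, ?_⟩
      rw [hcard, AlgHom.card, hquad]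
    obtain ⟨σ, hσ⟩ := hbij.2 ψ
    have hσne : σ ≠ 1 := by
      intro h1
      subst h1
      obtain ⟨x, hx⟩ := hLti φ
      have := DFunLike.congr_fun hσ x
      simp only [AlgHom.comp_apply] at this
      apply hx
      have : φ x = (starRingEnd ℂ) (φ x) := by
        simpa [φ', ψ] using this
      exact Complex.conj_eq_iff_im.mp this.symm
    rw [huniq σ hσne] at hσ
    intro x
    have := DFunLike.congr_fun hσ x
    simpa [φ', ψ] using this
  -- the unit w = σ₀(u)/u is a root of unity
  let j : (𝓞 L)ˣ →* Lˣ := Units.map (algebraMap (𝓞 L) L)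
  let s : Lˣ →* Lˣ := Units.map (σ₀ : L →* L)
  let v : Lˣ := j u
  let w : Lˣ := s v * v⁻¹
  have hvval : (v : L) = ((u : 𝓞 L) : L) := rfl
  have hvinvval : ((v⁻¹ : Lˣ) : L) = (((u⁻¹ : (𝓞 L)ˣ) : 𝓞 L) : L) := rfl
  have hwval : (w : L) = σ₀ ((u : 𝓞 L) : L) * (((u⁻¹ : (𝓞 L)ˣ) : 𝓞 L) : L) := rfl
  have hw_int : IsIntegral ℤ (w : L) := by
    rw [hwval]
    exact ((RingOfIntegers.isIntegral_coe _).map (σ₀ : L →+* L).toIntAlgHom).mul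
      (RingOfIntegers.isIntegral_coe _)
  have hnorm : ∀ φ : L →+* ℂ, ‖φ (w : L)‖ = 1 := by
    intro φ
    have hv0 : φ (v : L) ≠ 0 := by
      simp only [ne_eq, map_eq_zero]
      exact Units.ne_zero v
    have hwv : (w : L) = σ₀ (v : L) * ((v : L))⁻¹ := by
      rw [show ((w : Lˣ) : L) = ((s v : Lˣ) : L) * ((v⁻¹ : Lˣ) : L) from rfl,
        Units.val_inv_eq_inv_val]
      rfl
    rw [hwv, map_mul, map_inv₀, hconj φ, norm_mul, norm_inv, RCLike.norm_conj]
    field_simp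
  obtain ⟨k, hk, hwk⟩ := NumberField.Embeddings.pow_eq_one_of_norm_eq_one L ℂ hw_int hnorm
  -- counting roots of unity
  have hcardT : Nat.card (CommGroup.torsion Lˣ) = 2 * N := by
    rw [← hN]
    apply Nat.card_congr
    refine Equiv.ofBijective
      (fun g => ⟨((g : Lˣ) : L), ?_⟩) ⟨?_, ?_⟩
    · obtain ⟨n, hn, hgn⟩ := isOfFinOrder_iff_pow_eq_one.mp g.2
      refine ⟨n, hn, ?_⟩
      have := congrArg Units.val hgn
      simpa using this
    · intro a b h
      simp only [Subtype.mk.injEq] at h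
      exact Subtype.ext (Units.ext h)
    · rintro ⟨x, k', hk', hxk⟩
      have hmul : x * x ^ (k' - 1) = 1 := by
        rw [← pow_succ', Nat.sub_add_cancel hk']
        exact hxk
      refine ⟨⟨Units.mkOfMulEqOne x (x ^ (k' - 1)) hmul, ?_⟩, rfl⟩
      rw [CommGroup.mem_torsion, isOfFinOrder_iff_pow_eq_one]
      exact ⟨k', hk', Units.ext (by simpa using hxk)⟩
  have hwmem : w ∈ CommGroup.torsion Lˣ := by
    rw [CommGroup.mem_torsion, isOfFinOrder_iff_pow_eq_one]
    exact ⟨k, hk, Units.ext (by simpa using hwk)⟩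
  have hw2N : w ^ (2 * N) = 1 := by
    have := pow_card_eq_one' (x := (⟨w, hwmem⟩ : CommGroup.torsion Lˣ))
    rw [hcardT] at this
    have h2 := congrArg Subtype.val this
    simpa using h2
  -- hence u^{2N} is fixed by σ₀
  have hfix : σ₀ (((u : 𝓞 L) : L) ^ (2 * N)) = ((u : 𝓞 L) : L) ^ (2 * N) := by
    have h1 : (s v) ^ (2 * N) = v ^ (2 * N) := by
      have h := hw2N
      rw [show w = s v * v⁻¹ from rfl, mul_pow, inv_pow, mul_inv_eq_one] at h
      exact h
    have h2 := congrArg Units.val h1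
    rw [Units.val_pow_eq_pow_val, Units.val_pow_eq_pow_val] at h2
    rw [map_pow]
    exact h2
  -- conclude via the trace
  have huniv : (Finset.univ : Finset (L ≃ₐ[K] L)) = {1, σ₀} := by
    symm
    apply Finset.eq_univ_of_card
    rw [Finset.card_insert_of_notMem (by simp [hσ₀.symm]), Finset.card_singleton, hcard]
  have htr : algebraMap K L (Algebra.trace K L (((u : 𝓞 L) : L) ^ (2 * N)))
      = 2 * ((u : 𝓞 L) : L) ^ (2 * N) := by
    rw [trace_eq_sum_automorphisms, huniv,
      Finset.sum_insert (by simp [hσ₀.symm]), Finset.sum_singleton, hfix]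
    rw [AlgEquiv.one_apply]
    ring
  refine ⟨Algebra.trace K L (((u : 𝓞 L) : L) ^ (2 * N)) / 2, ?_, ?_⟩
  · rw [← isIntegral_algebraMap_iff (algebraMap K L).injective, map_div₀, htr,
      map_ofNat, mul_div_cancel_left₀ _ (two_ne_zero)]
    exact (RingOfIntegers.isIntegral_coe _).pow _
  · rw [map_div₀, htr, map_ofNat, mul_div_cancel_left₀ _ (two_ne_zero)]
end

section
/- Let f(x) = x³ − a x² − (a+3)x − 1 with a an integer, a ≥ −1. Then f has three distinct real roots, i.e., every complex root of f is real. -/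
/-- Shanks's simplest cubic `x³ − a x² − (a+3)x − 1`, for an integer `a ≥ −1`,
has three distinct real roots; in particular every complex root is real. -/
theorem shanks_cubic_real_roots (a : ℤ) (ha : -1 ≤ a) :
    (∃ x y z : ℝ, x ≠ y ∧ x ≠ z ∧ y ≠ z ∧
      x ^ 3 - a * x ^ 2 - (a + 3) * x - 1 = 0 ∧
      y ^ 3 - a * y ^ 2 - (a + 3) * y - 1 = 0 ∧
      z ^ 3 - a * z ^ 2 - (a + 3) * z - 1 = 0) ∧
    (∀ w : ℂ, w ^ 3 - a * w ^ 2 - (a + 3) * w - 1 = 0 → w.im = 0) := by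
  have hA : (-1 : ℝ) ≤ (a : ℝ) := by exact_mod_cast ha
  set p : ℝ → ℝ := fun t => t ^ 3 - a * t ^ 2 - (a + 3) * t - 1 with hp
  have hcont : Continuous p := by fun_prop
  -- values
  have hpm2 : p (-2) ≤ -1 := by simp only [hp]; nlinarith
  have hpm1 : p (-1) = 1 := by simp only [hp]; ring
  have hp0 : p 0 = -1 := by simp only [hp]; ring
  have hptop : 7 ≤ p ((a : ℝ) + 3) := by simp only [hp]; nlinarith
  -- roots by IVT
  obtain ⟨x, hxmem, hx⟩ : ∃ x ∈ Set.Icc (-2 : ℝ) (-1), p x = 0 := by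
    have h := intermediate_value_Icc (by norm_num : (-2 : ℝ) ≤ -1) hcont.continuousOn
    have : (0 : ℝ) ∈ Set.Icc (p (-2)) (p (-1)) := ⟨by linarith, by linarith⟩
    obtain ⟨x, hx1, hx2⟩ := h this
    exact ⟨x, hx1, hx2⟩
  obtain ⟨y, hymem, hy⟩ : ∃ y ∈ Set.Icc (-1 : ℝ) 0, p y = 0 := by
    have h := intermediate_value_Icc' (by norm_num : (-1 : ℝ) ≤ 0) hcont.continuousOn
    have : (0 : ℝ) ∈ Set.Icc (p 0) (p (-1)) := ⟨by linarith, by linarith⟩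
    obtain ⟨y, hy1, hy2⟩ := h this
    exact ⟨y, hy1, hy2⟩
  obtain ⟨z, hzmem, hz⟩ : ∃ z ∈ Set.Icc (0 : ℝ) ((a : ℝ) + 3), p z = 0 := by
    have h := intermediate_value_Icc (by linarith : (0 : ℝ) ≤ (a : ℝ) + 3) hcont.continuousOn
    have : (0 : ℝ) ∈ Set.Icc (p 0) (p ((a : ℝ) + 3)) := ⟨by linarith, by linarith⟩
    obtain ⟨z, hz1, hz2⟩ := h this
    exact ⟨z, hz1, hz2⟩
  -- distinctness
  have hxne : x ≠ -1 := fun h => by rw [h, hpm1] at hx; norm_num at hx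
  have hyne0 : y ≠ 0 := fun h => by rw [h, hp0] at hy; norm_num at hy
  have hxlt : x < -1 := lt_of_le_of_ne hxmem.2 hxne
  have hylt : y < 0 := lt_of_le_of_ne hymem.2 hyne0
  have hxy : x ≠ y := ne_of_lt (lt_of_lt_of_le hxlt hymem.1)
  have hxz : x ≠ z := ne_of_lt (lt_of_lt_of_le (by linarith) hzmem.1)
  have hyz : y ≠ z := ne_of_lt (lt_of_lt_of_le hylt hzmem.1)
  have hx' : x ^ 3 - a * x ^ 2 - (a + 3) * x - 1 = 0 := hx
  have hy' : y ^ 3 - a * y ^ 2 - (a + 3) * y - 1 = 0 := hy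
  have hz' : z ^ 3 - a * z ^ 2 - (a + 3) * z - 1 = 0 := hz
  refine ⟨⟨x, y, z, hxy, hxz, hyz, hx', hy', hz'⟩, ?_⟩
  -- Vieta
  have exy : x ^ 2 + x * y + y ^ 2 - a * (x + y) - (a + 3) = 0 := by
    have h : (x - y) * (x ^ 2 + x * y + y ^ 2 - a * (x + y) - (a + 3)) = 0 := by
      linear_combination hx' - hy'
    rcases mul_eq_zero.1 h with h | h
    · exact absurd (sub_eq_zero.1 h) hxy
    · exact h
  have exz : x ^ 2 + x * z + z ^ 2 - a * (x + z) - (a + 3) = 0 := by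
    have h : (x - z) * (x ^ 2 + x * z + z ^ 2 - a * (x + z) - (a + 3)) = 0 := by
      linear_combination hx' - hz'
    rcases mul_eq_zero.1 h with h | h
    · exact absurd (sub_eq_zero.1 h) hxz
    · exact h
  have h1 : x + y + z = a := by
    have h : (y - z) * (x + y + z - a) = 0 := by linear_combination exy - exz
    rcases mul_eq_zero.1 h with h | h
    · exact absurd (sub_eq_zero.1 h) hyz
    · linarith [sub_eq_zero.1 h]
  have h2 : x * y + y * z + z * x = -(a + 3) := by
    linear_combination (-1 : ℝ) * exy + (x + y) * h1
  have h3 : x * y * z = 1 := by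
    linear_combination hx' - x ^ 2 * h1 + x * h2
  intro w hw
  have c1 : (x : ℂ) + y + z = (a : ℂ) := by exact_mod_cast h1
  have c2 : (x : ℂ) * y + y * z + z * x = -((a : ℂ) + 3) := by exact_mod_cast h2
  have c3 : (x : ℂ) * y * z = 1 := by exact_mod_cast h3
  have key : (w - x) * (w - y) * (w - z) = 0 := by
    linear_combination hw - w ^ 2 * c1 + w * c2 - c3
  rcases mul_eq_zero.1 key with h | h
  · rcases mul_eq_zero.1 h with h | h
    · rw [sub_eq_zero.1 h]; exact Complex.ofReal_im x
    · rw [sub_eq_zero.1 h]; exact Complex.ofReal_im y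
  · rw [sub_eq_zero.1 h]; exact Complex.ofReal_im z
end

section
/- Every root of the polynomial x³ − a x² − (a+3)x − 1 (a ∈ ℤ) is a unit in the ring of algebraic integers, and if ρ is a root then −1/(ρ+1) is also a root. -/
/-- Every root of `x³ − a x² − (a+3)x − 1` is a unit in the ring of algebraic
integers, and if `ρ` is a root then so is `−1/(ρ+1)`. -/
theorem shanks_cubic_roots_units (a : ℤ) (ρ : ℂ)
    (hρ : ρ ^ 3 - a * ρ ^ 2 - (a + 3) * ρ - 1 = 0) :
    IsIntegral ℤ ρ ∧ (∃ v : ℂ, IsIntegral ℤ v ∧ ρ * v = 1) ∧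
    ρ + 1 ≠ 0 ∧
    (-1 / (ρ + 1)) ^ 3 - a * (-1 / (ρ + 1)) ^ 2 - (a + 3) * (-1 / (ρ + 1)) - 1 = 0 := by
  have ha : IsIntegral ℤ ((a : ℂ)) := by
    simpa using isIntegral_algebraMap (R := ℤ) (A := ℂ) (x := a)
  have h3 : IsIntegral ℤ ((3 : ℂ)) := by
    simpa using isIntegral_algebraMap (R := ℤ) (A := ℂ) (x := (3 : ℤ))
  have hint : IsIntegral ℤ ρ := by
    refine ⟨Polynomial.X ^ 3 - Polynomial.C a * Polynomial.X ^ 2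
      - Polynomial.C (a + 3) * Polynomial.X - 1, ?_, ?_⟩
    · monicity!
    · simp only [Polynomial.eval₂_sub, Polynomial.eval₂_mul, Polynomial.eval₂_pow,
        Polynomial.eval₂_X, Polynomial.eval₂_C, Polynomial.eval₂_one]
      simp only [eq_intCast]
      push_cast
      linear_combination hρ
  have hne : ρ + 1 ≠ 0 := by
    intro h
    exact one_ne_zero (show (1 : ℂ) = 0 by
      linear_combination hρ - (ρ ^ 2 - ((a : ℂ) + 1) * ρ - 2) * h)
  refine ⟨hint, ⟨ρ ^ 2 - a * ρ - (a + 3), ?_, by linear_combination hρ⟩, hne, ?_⟩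
  · exact ((hint.pow 2).sub (ha.mul hint)).sub (ha.add h3)
  · have key : (-1 / (ρ + 1)) ^ 3 - a * (-1 / (ρ + 1)) ^ 2 - (a + 3) * (-1 / (ρ + 1)) - 1
        = (-(ρ ^ 3 - a * ρ ^ 2 - (a + 3) * ρ - 1)) / (ρ + 1) ^ 3 := by
      field_simp
      ring
    rw [key, hρ]
    simp
end

section
/- For every integer t ≥ 4, the quartic polynomial x⁴ − t x³ − 6x² + t x + 1 has four distinct real roots. -/
open Polynomial

/-- For every integer `t ≥ 4`, the quartic `x⁴ − t x³ − 6x² + t x + 1` has four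
distinct real roots. -/
theorem gras_quartic_real_roots (t : ℤ) (ht : 4 ≤ t) :
    ∃ x₁ x₂ x₃ x₄ : ℝ, x₁ ≠ x₂ ∧ x₁ ≠ x₃ ∧ x₁ ≠ x₄ ∧ x₂ ≠ x₃ ∧ x₂ ≠ x₄ ∧ x₃ ≠ x₄ ∧
      (∀ x ∈ ({x₁, x₂, x₃, x₄} : Set ℝ),
        x ^ 4 - t * x ^ 3 - 6 * x ^ 2 + t * x + 1 = 0) ∧
      (∀ z : ℂ, z ^ 4 - t * z ^ 3 - 6 * z ^ 2 + t * z + 1 = 0 → z.im = 0) := by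
  have hT : (4 : ℝ) ≤ (t : ℝ) := by exact_mod_cast ht
  set T : ℝ := (t : ℝ) with hTdef
  set f : ℝ → ℝ := fun x => x ^ 4 - T * x ^ 3 - 6 * x ^ 2 + T * x + 1 with hf
  have hcont : Continuous f := by fun_prop
  have key : ∀ a b : ℝ, a ≤ b → f b < 0 → 0 < f a → ∃ r ∈ Set.Ioo a b, f r = 0 := by
    intro a b hab hfb hfa
    obtain ⟨r, hr, hr0⟩ := intermediate_value_Ioo' hab hcont.continuousOn
      (Set.mem_Ioo.mpr ⟨hfb, hfa⟩)
    exact ⟨r, hr, hr0⟩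
  have key' : ∀ a b : ℝ, a ≤ b → f a < 0 → 0 < f b → ∃ r ∈ Set.Ioo a b, f r = 0 := by
    intro a b hab hfa hfb
    obtain ⟨r, hr, hr0⟩ := intermediate_value_Ioo hab hcont.continuousOn
      (Set.mem_Ioo.mpr ⟨hfa, hfb⟩)
    exact ⟨r, hr, hr0⟩
  have e1 : f (-2) = 6 * T - 7 := by simp only [hf]; ring
  have e2 : f (-1) = -4 := by simp only [hf]; ring
  have e3 : f 0 = 1 := by simp only [hf]; norm_num
  have e4 : f 1 = -4 := by simp only [hf]; ring
  have e5 : f (T + 2) = 2 * (T + 2) ^ 3 - 6 * (T + 2) ^ 2 + T * (T + 2) + 1 := by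
    simp only [hf]; ring
  obtain ⟨r₁, hr₁, hfr₁⟩ := key (-2) (-1) (by norm_num) (by rw [e2]; norm_num)
    (by rw [e1]; linarith)
  obtain ⟨r₂, hr₂, hfr₂⟩ := key' (-1) 0 (by norm_num) (by rw [e2]; norm_num)
    (by rw [e3]; norm_num)
  obtain ⟨r₃, hr₃, hfr₃⟩ := key 0 1 (by norm_num) (by rw [e4]; norm_num)
    (by rw [e3]; norm_num)
  obtain ⟨r₄, hr₄, hfr₄⟩ := key' 1 (T + 2) (by linarith) (by rw [e4]; norm_num)
    (by rw [e5]; nlinarith)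
  obtain ⟨h1a, h1b⟩ := hr₁
  obtain ⟨h2a, h2b⟩ := hr₂
  obtain ⟨h3a, h3b⟩ := hr₃
  obtain ⟨h4a, h4b⟩ := hr₄
  have h12 : r₁ ≠ r₂ := by intro h; rw [h] at h1b; linarith
  have h13 : r₁ ≠ r₃ := by intro h; rw [h] at h1b; linarith
  have h14 : r₁ ≠ r₄ := by intro h; rw [h] at h1b; linarith
  have h23 : r₂ ≠ r₃ := by intro h; rw [h] at h2b; linarith
  have h24 : r₂ ≠ r₄ := by intro h; rw [h] at h2b; linarith
  have h34 : r₃ ≠ r₄ := by intro h; rw [h] at h3b; linarith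
  refine ⟨r₁, r₂, r₃, r₄, h12, h13, h14, h23, h24, h34, ?_, ?_⟩
  · intro x hx
    simp only [Set.mem_insert_iff, Set.mem_singleton_iff] at hx
    rcases hx with rfl | rfl | rfl | rfl
    · exact hfr₁
    · exact hfr₂
    · exact hfr₃
    · exact hfr₄
  · -- complex part
    set p : Polynomial ℂ :=
      X ^ 4 - C (t : ℂ) * X ^ 3 - C 6 * X ^ 2 + C (t : ℂ) * X + C 1 with hp
    have heval : ∀ z : ℂ, p.eval z = z ^ 4 - t * z ^ 3 - 6 * z ^ 2 + t * z + 1 := by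
      intro z; simp [hp]
    have hdeg : p.natDegree = 4 := by rw [hp]; compute_degree!
    have hp0 : p ≠ 0 := by intro h; rw [h] at hdeg; simp at hdeg
    have hroot : ∀ r : ℝ, f r = 0 → ((r : ℂ) ∈ p.roots) := by
      intro r hr
      rw [mem_roots hp0, IsRoot.def, heval]
      have : (r : ℝ) ^ 4 - T * r ^ 3 - 6 * r ^ 2 + T * r + 1 = 0 := hr
      rw [hTdef] at this
      exact_mod_cast congrArg (Complex.ofReal) this
    have hcF : ∀ i j : ℝ, i ≠ j → (i : ℂ) ≠ (j : ℂ) := by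
      intro i j h; exact_mod_cast h
    have hsub : ({(r₁ : ℂ), (r₂ : ℂ), (r₃ : ℂ), (r₄ : ℂ)} : Finset ℂ) ⊆ p.roots.toFinset := by
      intro z hz
      simp only [Finset.mem_insert, Finset.mem_singleton] at hz
      rw [Multiset.mem_toFinset]
      rcases hz with rfl | rfl | rfl | rfl
      · exact hroot r₁ hfr₁
      · exact hroot r₂ hfr₂
      · exact hroot r₃ hfr₃
      · exact hroot r₄ hfr₄
    have hcard : ({(r₁ : ℂ), (r₂ : ℂ), (r₃ : ℂ), (r₄ : ℂ)} : Finset ℂ).card = 4 := by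
      rw [Finset.card_insert_of_notMem (by
          simp only [Finset.mem_insert, Finset.mem_singleton]
          push_neg
          exact ⟨hcF _ _ h12, hcF _ _ h13, hcF _ _ h14⟩),
        Finset.card_insert_of_notMem (by
          simp only [Finset.mem_insert, Finset.mem_singleton]
          push_neg
          exact ⟨hcF _ _ h23, hcF _ _ h24⟩),
        Finset.card_insert_of_notMem (by
          simp only [Finset.mem_singleton]
          exact hcF _ _ h34),
        Finset.card_singleton]
    have hle : p.roots.toFinset.card ≤ 4 := by
      calc p.roots.toFinset.card ≤ Multiset.card p.roots := Multiset.toFinset_card_le _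
        _ ≤ p.natDegree := p.card_roots'
        _ = 4 := hdeg
    have heq : ({(r₁ : ℂ), (r₂ : ℂ), (r₃ : ℂ), (r₄ : ℂ)} : Finset ℂ) = p.roots.toFinset :=
      Finset.eq_of_subset_of_card_le hsub (by rw [hcard]; exact hle)
    intro z hz
    have : z ∈ p.roots.toFinset := by
      rw [Multiset.mem_toFinset, mem_roots hp0, IsRoot.def, heval]
      exact hz
    rw [← heq] at this
    simp only [Finset.mem_insert, Finset.mem_singleton] at this
    rcases this with rfl | rfl | rfl | rfl <;> exact Complex.ofReal_im _
end
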